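/- Fix β > 2, m ∈ ℕ and L ≥ 1, and let F̂ : R_{m,13} → R_{m,13} be an L-bi-Lipschitz homeomorphism such that F̂(x₁,x₂,x₃,x₄) = (x₁,x₂,x₃,−x₄) for every x ∈ K_{B,m} ∩ ([−2m−3,2m+3]^3 × [−3,3]). Then there exists M ∈ ℕ, depending only on L and β, such that F̂(x) ∉ 𝒯 for every x ∈ 𝒢, where 𝒢 = R_{m,13} \ ⋃_{n₁,n₂,n₃=−m}^m [ ([−2m−3,2m+3] × U_1^3 + (0,2n₂,2n₃,0)) ∪ (U_1^1 × [−2m−3,2m+3] × U_1^2 + (2n₁,0,2n₃,0)) ∪ (U_1^2 × [−2m−3,2m+3] × U_1^1 + (2n₁,2n₂,0,0)) ∪ (U_1^3 × [−3,3] + (2n₁,2n₂,2n₃,0)) ] and 𝒯 = ⋃_{n₁,n₂,n₃=−m}^m [ ([−2m−2,2m+2] × U_{M+1}^3 + (0,2n₂,2n₃,0)) ∪ (U_{M+1}^1 × [−2m−2,2m+2] × U_{M+1}^2 + (2n₁,0,2n₃,0)) ∪ (U_{M+1}^2 × [−2m−2,2m+2] × U_{M+1}^1 + (2n₁,2n₂,0,0))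 ∪ (U_{M+1}^3 × [−2,2] + (2n₁,2n₂,2n₃,0)) ]. -/

import Mathlib

noncomputable section
open MeasureTheory Set Filter

/-- `ℝ⁴` as Euclidean space. -/
abbrev E4 : Type := EuclideanSpace ℝ (Fin 4)

/-- The box `R_{m,t} = [-2m-5, 2m+5]³ × [-1-t, 1+t]`. -/
def Rbox (m : ℕ) (t : ℝ) : Set E4 :=
  {x | |x 0| ≤ 2 * (m : ℝ) + 5 ∧ |x 1| ≤ 2 * (m : ℝ) + 5 ∧ |x 2| ≤ 2 * (m : ℝ) + 5 ∧
    |x 3| ≤ 1 + t}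

/-- The sequence `r_k = 2^{-k(β+1)}` defining the thin Cantor-type set `C_B`. -/
def rB (β : ℝ) (k : ℕ) : ℝ := (2 : ℝ) ^ (-(β + 1) * (k : ℝ))

/-- One-dimensional `k`-th generation `U_k^1 ⊆ ℝ` of the Cantor-type construction. -/
def cantorU1 (s : ℕ → ℝ) (k : ℕ) : Set ℝ :=
  ⋃ (w : Fin k → ℝ) (_ : ∀ j, w j = 1 ∨ w j = -1),
    {t | |t - 2⁻¹ * ∑ j : Fin k, s j.1 * w j| < s k}

/-- One-dimensional Cantor-type set `C(1) ⊆ ℝ`. -/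
def cantorTypeSet1 (s : ℕ → ℝ) : Set ℝ :=
  ⋂ (k : ℕ) (_ : 1 ≤ k), cantorU1 s k

/-- The translation vector `(2n₁, 2n₂, 2n₃, 0)`. -/
def tr (n₁ n₂ n₃ : ℤ) : E4 :=
  (2 * (n₁ : ℝ)) • EuclideanSpace.single 0 (1 : ℝ) +
  (2 * (n₂ : ℝ)) • EuclideanSpace.single 1 (1 : ℝ) +
  (2 * (n₃ : ℝ)) • EuclideanSpace.single 2 (1 : ℝ)

/-- `K_{B,m}`: all lines parallel to the coordinate axes through the translated
copies of the Cantor set `C_B(4)`. -/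
def KBm (β : ℝ) (m : ℕ) : Set E4 :=
  {x | ∃ n₁ n₂ n₃ : ℤ, |n₁| ≤ (m : ℤ) ∧ |n₂| ≤ (m : ℤ) ∧ |n₃| ≤ (m : ℤ) ∧
    ∃ (c : E4) (i : Fin 4) (t : ℝ),
      (∀ j, c j ∈ cantorTypeSet1 (rB β)) ∧
      x = c + tr n₁ n₂ n₃ + t • EuclideanSpace.single i (1 : ℝ)}

/-- The reflection `(x₁,x₂,x₃,x₄) ↦ (x₁,x₂,x₃,−x₄)`. -/
def reflect (x : E4) : E4 := x - (2 * x 3) • EuclideanSpace.single 3 (1 : ℝ)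

/-- Membership in the union (over translations `(2n₁,2n₂,2n₃,0)`, `|nᵢ| ≤ m`) of the
four sets `[-b₁,b₁] × U_k³ + (0,2n₂,2n₃,0)`, `U_k¹ × [-b₁,b₁] × U_k² + (2n₁,0,2n₃,0)`,
`U_k² × [-b₁,b₁] × U_k¹ + (2n₁,2n₂,0,0)` and `U_k³ × [-b₄,b₄] + (2n₁,2n₂,2n₃,0)`. -/
def nearLines (β : ℝ) (m k : ℕ) (b₁ b₄ : ℝ) (x : E4) : Prop :=
  ∃ n₁ n₂ n₃ : ℤ, |n₁| ≤ (m : ℤ) ∧ |n₂| ≤ (m : ℤ) ∧ |n₃| ≤ (m : ℤ) ∧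
    ((|x 0| ≤ b₁ ∧ x 1 - 2 * (n₂ : ℝ) ∈ cantorU1 (rB β) k ∧
        x 2 - 2 * (n₃ : ℝ) ∈ cantorU1 (rB β) k ∧ x 3 ∈ cantorU1 (rB β) k) ∨
     (x 0 - 2 * (n₁ : ℝ) ∈ cantorU1 (rB β) k ∧ |x 1| ≤ b₁ ∧
        x 2 - 2 * (n₃ : ℝ) ∈ cantorU1 (rB β) k ∧ x 3 ∈ cantorU1 (rB β) k) ∨
     (x 0 - 2 * (n₁ : ℝ) ∈ cantorU1 (rB β) k ∧ x 1 - 2 * (n₂ : ℝ) ∈ cantorU1 (rB β) k ∧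
        |x 2| ≤ b₁ ∧ x 3 ∈ cantorU1 (rB β) k) ∨
     (x 0 - 2 * (n₁ : ℝ) ∈ cantorU1 (rB β) k ∧ x 1 - 2 * (n₂ : ℝ) ∈ cantorU1 (rB β) k ∧
        x 2 - 2 * (n₃ : ℝ) ∈ cantorU1 (rB β) k ∧ |x 3| ≤ b₄))

lemma rB_eq_pow (β : ℝ) (k : ℕ) : rB β k = (rB β 1) ^ k := by
  unfold rB
  rw [← Real.rpow_natCast ((2:ℝ) ^ (-(β+1) * (1:ℕ))) k, ← Real.rpow_mul (by norm_num)]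
  norm_num

lemma rB_zero (β : ℝ) : rB β 0 = 1 := by simp [rB]

lemma rB_pos (β : ℝ) (k : ℕ) : 0 < rB β k := Real.rpow_pos_of_pos (by norm_num) _

lemma rB_one_lt (β : ℝ) (hβ : 2 < β) : rB β 1 < 1/8 := by
  unfold rB
  have h : (-(β+1) * ((1:ℕ):ℝ)) < (-3 : ℝ) := by push_cast; linarith
  calc (2:ℝ) ^ (-(β+1) * ((1:ℕ):ℝ)) < (2:ℝ) ^ (-3:ℝ) :=
        Real.rpow_lt_rpow_of_exponent_lt (by norm_num) h
    _ = 1/8 := by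
        rw [show (-3:ℝ) = -((3:ℕ):ℝ) by norm_num, Real.rpow_neg (by norm_num),
          Real.rpow_natCast]
        norm_num

lemma rB_one_le (β : ℝ) (hβ : 2 < β) : rB β 1 ≤ 1/8 := (rB_one_lt β hβ).le

lemma summable_rB (β : ℝ) (hβ : 2 < β) (v : ℕ → ℝ) (hv : ∀ j, |v j| ≤ 1) :
    Summable (fun j => rB β j * v j) := by
  have hq0 : (0:ℝ) ≤ rB β 1 := (rB_pos β 1).le
  have hq1 : rB β 1 < 1 := lt_of_le_of_lt (rB_one_le β hβ) (by norm_num)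
  apply Summable.of_norm_bounded (summable_geometric_of_lt_one hq0 hq1)
  intro j
  rw [Real.norm_eq_abs, abs_mul, rB_eq_pow, abs_of_nonneg (pow_nonneg hq0 j)]
  calc (rB β 1)^j * |v j| ≤ (rB β 1)^j * 1 :=
        mul_le_mul_of_nonneg_left (hv j) (pow_nonneg hq0 j)
    _ = (rB β 1)^j := mul_one _

lemma tail_bound (β : ℝ) (hβ : 2 < β) (v : ℕ → ℝ) (hv : ∀ j, |v j| ≤ 1) (k : ℕ) :
    |∑' j, rB β (j + k) * v (j + k)| ≤ (8/7) * rB β k := by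
  have hq0 : (0:ℝ) ≤ rB β 1 := (rB_pos β 1).le
  have hq1 : rB β 1 < 1 := lt_of_le_of_lt (rB_one_le β hβ) (by norm_num)
  have hg : Summable (fun j : ℕ => (rB β 1)^j * rB β k) :=
    (summable_geometric_of_lt_one hq0 hq1).mul_right _
  have hk0 : (0:ℝ) ≤ rB β k := (rB_pos β k).le
  have hpow : ∀ j : ℕ, (0:ℝ) ≤ (rB β 1)^j := fun j => pow_nonneg hq0 j
  have hb : ∀ j : ℕ, |rB β (j + k) * v (j + k)| ≤ (rB β 1)^j * rB β k := by
    intro j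
    have h1 : rB β (j + k) = (rB β 1)^j * rB β k := by
      rw [rB_eq_pow β (j+k), pow_add, rB_eq_pow β k]
    rw [abs_mul, h1, abs_of_nonneg (mul_nonneg (hpow j) hk0)]
    calc (rB β 1)^j * rB β k * |v (j+k)| ≤ (rB β 1)^j * rB β k * 1 :=
          mul_le_mul_of_nonneg_left (hv _) (mul_nonneg (hpow j) hk0)
      _ = (rB β 1)^j * rB β k := mul_one _
  have hs : Summable (fun j : ℕ => rB β (j + k) * v (j + k)) := by
    apply Summable.of_norm_bounded hg
    intro j; rw [Real.norm_eq_abs]; exact hb j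
  calc |∑' j, rB β (j + k) * v (j + k)| ≤ ∑' j, |rB β (j + k) * v (j + k)| := by
        have := norm_tsum_le_tsum_norm (f := fun j => rB β (j + k) * v (j + k))
          (by simpa only [Real.norm_eq_abs] using hs.abs)
        simpa only [Real.norm_eq_abs] using this
    _ ≤ ∑' j : ℕ, (rB β 1)^j * rB β k := hs.abs.tsum_le_tsum (fun j => hb j) hg
    _ = (1 - rB β 1)⁻¹ * rB β k := by
        rw [tsum_mul_right, tsum_geometric_of_lt_one hq0 hq1]
    _ ≤ (8/7) * rB β k := by
        apply mul_le_mul_of_nonneg_right _ (rB_pos β k).le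
        rw [inv_le_comm₀ (by linarith [rB_one_le β hβ]) (by norm_num)]
        linarith [rB_one_le β hβ, rB_pos β 1]

def cpoint (β : ℝ) (v : ℕ → ℝ) : ℝ := 2⁻¹ * ∑' j, rB β j * v j

lemma cpoint_partial (β : ℝ) (hβ : 2 < β) (v : ℕ → ℝ) (hv : ∀ j, |v j| ≤ 1) (k : ℕ) :
    |cpoint β v - 2⁻¹ * ∑ j ∈ Finset.range k, rB β j * v j| ≤ (4/7) * rB β k := by
  have hs := summable_rB β hβ v hv
  have h := hs.sum_add_tsum_nat_add k
  have : cpoint β v - 2⁻¹ * ∑ j ∈ Finset.range k, rB β j * v j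
      = 2⁻¹ * ∑' j, rB β (j + k) * v (j + k) := by
    unfold cpoint; rw [← h]; ring
  rw [this, abs_mul]
  have := tail_bound β hβ v hv k
  rw [abs_of_nonneg (by norm_num : (0:ℝ) ≤ (2:ℝ)⁻¹)]
  linarith

lemma mem_cantorU1_iff (s : ℕ → ℝ) (k : ℕ) (t : ℝ) :
    t ∈ cantorU1 s k ↔ ∃ w : Fin k → ℝ, (∀ j, w j = 1 ∨ w j = -1) ∧
      |t - 2⁻¹ * ∑ j : Fin k, s j.1 * w j| < s k := by
  simp [cantorU1, Set.mem_iUnion]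

lemma cpoint_mem_C (β : ℝ) (hβ : 2 < β) (v : ℕ → ℝ) (hv : ∀ j, v j = 1 ∨ v j = -1) :
    cpoint β v ∈ cantorTypeSet1 (rB β) := by
  have hv1 : ∀ j, |v j| ≤ 1 := by intro j; rcases hv j with h | h <;> simp [h]
  refine Set.mem_iInter₂.2 (fun k _ => ?_)
  rw [mem_cantorU1_iff]
  refine ⟨fun j => v j.1, fun j => hv j.1, ?_⟩
  rw [Fin.sum_univ_eq_sum_range (fun j => rB β j * v j) k]
  calc |cpoint β v - 2⁻¹ * ∑ j ∈ Finset.range k, rB β j * v j| ≤ (4/7) * rB β k :=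
        cpoint_partial β hβ v hv1 k
    _ < rB β k := by nlinarith [rB_pos β k]

lemma cantor_dense (β : ℝ) (hβ : 2 < β) (k : ℕ) (p : ℝ) (hp : p ∈ cantorU1 (rB β) k) :
    ∃ c ∈ cantorTypeSet1 (rB β), |p - c| ≤ 2 * rB β k := by
  rw [mem_cantorU1_iff] at hp
  obtain ⟨w, hw, hpw⟩ := hp
  set v : ℕ → ℝ := fun j => if h : j < k then w ⟨j, h⟩ else 1 with hv_def
  have hv : ∀ j, v j = 1 ∨ v j = -1 := by
    intro j; by_cases h : j < k <;> simp [hv_def, h]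
    exact hw _
  have hv1 : ∀ j, |v j| ≤ 1 := by intro j; rcases hv j with h | h <;> simp [h]
  refine ⟨cpoint β v, cpoint_mem_C β hβ v hv, ?_⟩
  have hsum : (∑ j : Fin k, rB β j.1 * w j) = ∑ j ∈ Finset.range k, rB β j * v j := by
    rw [← Fin.sum_univ_eq_sum_range (fun j => rB β j * v j) k]
    apply Finset.sum_congr rfl
    intro j _
    simp [hv_def, j.2]
  have h1 := cpoint_partial β hβ v hv1 k
  rw [← hsum] at h1
  have h3 := abs_sub_le p (2⁻¹ * ∑ j : Fin k, rB β j.1 * w j) (cpoint β v)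
  rw [abs_sub_comm (2⁻¹ * ∑ j : Fin k, rB β j.1 * w j) (cpoint β v)] at h3
  linarith [rB_pos β k]

lemma cantor_symm (β : ℝ) (c : ℝ) (hc : c ∈ cantorTypeSet1 (rB β)) :
    -c ∈ cantorTypeSet1 (rB β) := by
  refine Set.mem_iInter₂.2 (fun k hk => ?_)
  have := Set.mem_iInter₂.1 hc k hk
  rw [mem_cantorU1_iff] at this ⊢
  obtain ⟨w, hw, hcw⟩ := this
  refine ⟨fun j => -w j, fun j => by rcases hw j with h | h <;> simp [h], ?_⟩
  have hs : (∑ j : Fin k, rB β j.1 * (-w j)) = -∑ j : Fin k, rB β j.1 * w j := by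
    rw [← Finset.sum_neg_distrib]; apply Finset.sum_congr rfl; intros; ring
  rw [hs]
  calc |-c - 2⁻¹ * -∑ j : Fin k, rB β j.1 * w j|
      = |c - 2⁻¹ * ∑ j : Fin k, rB β j.1 * w j| := by rw [abs_sub_comm]; ring_nf
    _ < rB β k := hcw

lemma cantor_close_half (β : ℝ) (hβ : 2 < β) (c : ℝ) (hc : c ∈ cantorTypeSet1 (rB β)) :
    ∃ w : ℝ, (w = 1 ∨ w = -1) ∧ |c - 2⁻¹ * w| ≤ 2⁻¹ * rB β 1 + rB β 2 := by
  have h2 := Set.mem_iInter₂.1 hc 2 (by decide)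
  rw [mem_cantorU1_iff] at h2
  obtain ⟨w, hw, hcw⟩ := h2
  refine ⟨w 0, hw 0, ?_⟩
  rw [Fin.sum_univ_two] at hcw
  simp only [Fin.val_zero, Fin.val_one, rB_zero, one_mul] at hcw
  have hw1 : |w 1| = 1 := by rcases hw 1 with h | h <;> simp [h]
  have : |c - 2⁻¹ * w 0| ≤ |c - 2⁻¹ * (w 0 + rB β 1 * w 1)| + 2⁻¹ * (rB β 1 * |w 1|) := by
    have := abs_sub_le c (2⁻¹ * (w 0 + rB β 1 * w 1)) (2⁻¹ * w 0)
    have h4 : |2⁻¹ * (w 0 + rB β 1 * w 1) - 2⁻¹ * w 0| = 2⁻¹ * (rB β 1 * |w 1|) := by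
      rw [show 2⁻¹ * (w 0 + rB β 1 * w 1) - 2⁻¹ * w 0 = 2⁻¹ * (rB β 1 * w 1) by ring,
        abs_mul, abs_mul, abs_of_nonneg (by norm_num : (0:ℝ) ≤ (2:ℝ)⁻¹),
        abs_of_nonneg (rB_pos β 1).le]
    linarith
  rw [hw1] at this
  linarith [hcw]

lemma cantor_abs_le (β : ℝ) (hβ : 2 < β) (c : ℝ) (hc : c ∈ cantorTypeSet1 (rB β)) :
    |c| ≤ 1 := by
  obtain ⟨w, hw, hcw⟩ := cantor_close_half β hβ c hc
  have hq : rB β 1 ≤ 1/8 := rB_one_le β hβ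
  have hq2 : rB β 2 ≤ (1/8)^2 := by
    rw [rB_eq_pow]
    exact pow_le_pow_left₀ (rB_pos β 1).le hq 2
  have hw1 : |2⁻¹ * w| ≤ 2⁻¹ := by rcases hw with h | h <;> rw [h] <;> norm_num [abs_le]
  calc |c| ≤ |c - 2⁻¹ * w| + |2⁻¹ * w| := by
        have := abs_sub_abs_le_abs_sub c (2⁻¹*w); have := abs_add_le (c - 2⁻¹*w) (2⁻¹*w)
        simpa using this
    _ ≤ 1 := by norm_num at hq2; linarith

lemma mem_U1_of_close (β : ℝ) (hβ : 2 < β) (c x : ℝ) (hc : c ∈ cantorTypeSet1 (rB β))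
    (hd : |x - c| ≤ (3/8) * rB β 1) : x ∈ cantorU1 (rB β) 1 := by
  obtain ⟨w, hw, hcw⟩ := cantor_close_half β hβ c hc
  rw [mem_cantorU1_iff]
  refine ⟨fun _ => w, fun _ => hw, ?_⟩
  rw [Fin.sum_univ_one]
  simp only [Fin.val_zero, rB_zero, one_mul]
  have hq2 : rB β 2 < (1/8) * rB β 1 := by
    rw [rB_eq_pow β 2, pow_two]
    exact mul_lt_mul_of_pos_right (rB_one_lt β hβ) (rB_pos β 1)
  have := abs_sub_le x c (2⁻¹ * w)
  have hpos := rB_pos β 1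
  linarith

def toE4 (a : Fin 4 → ℝ) : E4 := WithLp.toLp 2 a

@[simp] lemma toE4_apply (a : Fin 4 → ℝ) (j : Fin 4) : toE4 a j = a j := rfl

lemma tr_apply (n₁ n₂ n₃ : ℤ) (j : Fin 4) :
    tr n₁ n₂ n₃ j = if j = 0 then 2*(n₁:ℝ) else if j = 1 then 2*(n₂:ℝ)
      else if j = 2 then 2*(n₃:ℝ) else 0 := by
  fin_cases j <;>
    simp [tr, EuclideanSpace.single_apply, PiLp.add_apply, PiLp.smul_apply]

lemma reflect_apply (x : E4) (j : Fin 4) :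
    reflect x j = if j = 3 then -(x 3) else x j := by
  fin_cases j <;>
    simp [reflect, EuclideanSpace.single_apply, PiLp.sub_apply, PiLp.smul_apply] <;> ring

lemma zpt_apply (a : Fin 4 → ℝ) (n₁ n₂ n₃ : ℤ) (i : Fin 4) (t : ℝ) (j : Fin 4) :
    (toE4 a + tr n₁ n₂ n₃ + t • EuclideanSpace.single i (1:ℝ)) j
      = a j + tr n₁ n₂ n₃ j + (if j = i then t else 0) := by
  by_cases h : j = i <;>
    simp [PiLp.add_apply, PiLp.smul_apply, EuclideanSpace.single_apply, h]

lemma coord_le_dist (x y : E4) (i : Fin 4) : |x i - y i| ≤ dist x y := by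
  have := EuclideanSpace.dist_eq x y
  rw [this]
  have h1 : |x i - y i| = Real.sqrt ((x i - y i)^2) := (Real.sqrt_sq_eq_abs _).symm
  rw [h1]
  apply Real.sqrt_le_sqrt
  have : (x i - y i)^2 = dist (x i) (y i)^2 := by rw [Real.dist_eq, sq_abs]
  rw [this]
  exact Finset.single_le_sum (f := fun i => dist (x i) (y i)^2)
    (fun j _ => sq_nonneg _) (Finset.mem_univ i)

lemma dist_le_sum_coords (x y : E4) (b : Fin 4 → ℝ) (hb : ∀ i, 0 ≤ b i)
    (h : ∀ i, |x i - y i| ≤ b i) : dist x y ≤ b 0 + b 1 + b 2 + b 3 := by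
  rw [EuclideanSpace.dist_eq]
  have h2 : ∀ i, dist (x i) (y i)^2 ≤ (b i)^2 := by
    intro i
    rw [Real.dist_eq, sq_abs]
    exact sq_le_sq' (abs_le.1 (h i)).1 (abs_le.1 (h i)).2
  calc Real.sqrt (∑ i, dist (x i) (y i)^2) ≤ Real.sqrt ((b 0 + b 1 + b 2 + b 3)^2) := by
        apply Real.sqrt_le_sqrt
        rw [Fin.sum_univ_four]
        nlinarith [h2 0, h2 1, h2 2, h2 3, mul_nonneg (hb 0) (hb 1), mul_nonneg (hb 0) (hb 2),
          mul_nonneg (hb 0) (hb 3), mul_nonneg (hb 1) (hb 2), mul_nonneg (hb 1) (hb 3),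
          mul_nonneg (hb 2) (hb 3)]
    _ = b 0 + b 1 + b 2 + b 3 := Real.sqrt_sq (by linarith [hb 0, hb 1, hb 2, hb 3])


lemma tr_0 (n₁ n₂ n₃ : ℤ) : tr n₁ n₂ n₃ 0 = 2*(n₁:ℝ) := by rw [tr_apply]; rfl
lemma tr_1 (n₁ n₂ n₃ : ℤ) : tr n₁ n₂ n₃ 1 = 2*(n₂:ℝ) := by rw [tr_apply]; rfl
lemma tr_2 (n₁ n₂ n₃ : ℤ) : tr n₁ n₂ n₃ 2 = 2*(n₃:ℝ) := by rw [tr_apply]; rfl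
lemma tr_3 (n₁ n₂ n₃ : ℤ) : tr n₁ n₂ n₃ 3 = 0 := by rw [tr_apply]; rfl

lemma core (β L : ℝ) (hβ : 2 < β) (hL : 1 ≤ L) (M : ℕ) (hM : 48 * L < 2^M)
    (m : ℕ) (Fh : E4 → E4)
    (hbl : ∀ x ∈ Rbox m 13, ∀ y ∈ Rbox m 13,
      L⁻¹ * dist x y ≤ dist (Fh x) (Fh y) ∧ dist (Fh x) (Fh y) ≤ L * dist x y)
    (href : ∀ x ∈ KBm β m,
      |x 0| ≤ 2 * (m : ℝ) + 3 → |x 1| ≤ 2 * (m : ℝ) + 3 → |x 2| ≤ 2 * (m : ℝ) + 3 →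
      |x 3| ≤ 3 → Fh x = reflect x)
    (x : E4) (hx : x ∈ Rbox m 13)
    (n₁ n₂ n₃ : ℤ) (hn₁ : |n₁| ≤ (m:ℤ)) (hn₂ : |n₂| ≤ (m:ℤ)) (hn₃ : |n₃| ≤ (m:ℤ))
    (i : Fin 4)
    (hfree : |Fh x i| ≤ 2*(m:ℝ)+2)
    (hfree3 : i = 3 → |Fh x 3| ≤ 2)
    (hcant : ∀ j, j ≠ i → Fh x j - tr n₁ n₂ n₃ j ∈ cantorU1 (rB β) (M+1)) :
    (∀ j, j ≠ i → x j - tr n₁ n₂ n₃ j ∈ cantorU1 (rB β) 1) ∧ |x i| ≤ |Fh x i| + 1 := by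
  have hL0 : (0:ℝ) < L := by linarith
  set y := Fh x with hy
  set v := tr n₁ n₂ n₃ with hv
  set s := rB β (M+1) with hs_def
  set q := rB β 1 with hq_def
  have hs0 : 0 < s := rB_pos β (M+1)
  have hq0 : 0 < q := rB_pos β 1
  have hq : q < 1/8 := rB_one_lt β hβ
  -- numeric bound : 8 * L * s ≤ q/6
  have hsq : s ≤ q * (1/2)^M := by
    rw [hs_def, rB_eq_pow β (M+1), pow_succ, mul_comm, ← hq_def]
    apply mul_le_mul_of_nonneg_left _ hq0.le
    exact pow_le_pow_left₀ hq0.le (by linarith) M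
  have h2M : (1/2:ℝ)^M < 1/(48*L) := by
    rw [div_pow, one_pow, div_lt_div_iff₀ (by positivity) (by positivity)]
    linarith
  have hkey : 8 * L * s ≤ q/6 := by
    have h1 : 8 * L * s ≤ 8 * L * (q * (1/2)^M) := by
      apply mul_le_mul_of_nonneg_left hsq (by positivity)
    have h2 : 8 * L * (q * (1/2)^M) ≤ 8 * L * (q * (1/(48*L))) := by
      apply mul_le_mul_of_nonneg_left _ (by positivity)
      exact mul_le_mul_of_nonneg_left h2M.le hq0.le
    have h3 : 8 * L * (q * (1/(48*L))) = q/6 := by field_simp; ring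
    linarith
  have hkey1 : 8 * L * s ≤ 1 := by nlinarith
  -- choose Cantor points near the coordinates of y
  have hex : ∀ j, ∃ c, c ∈ cantorTypeSet1 (rB β) ∧ (j ≠ i → |y j - v j - c| ≤ 2*s) := by
    intro j
    by_cases hj : j = i
    · exact ⟨cpoint β (fun _ => 1), cpoint_mem_C β hβ _ (fun _ => Or.inl rfl),
        fun h => absurd hj h⟩
    · obtain ⟨c, hc1, hc2⟩ := cantor_dense β hβ (M+1) _ (hcant j hj)
      exact ⟨c, hc1, fun _ => hc2⟩
  choose b hb hbd using hex
  set a : Fin 4 → ℝ := fun j => if j = 3 then -(b 3) else b j with ha_def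
  have ha : ∀ j, a j ∈ cantorTypeSet1 (rB β) := by
    intro j
    simp only [ha_def]
    by_cases hj : j = 3
    · rw [if_pos hj]; exact cantor_symm β _ (hb 3)
    · rw [if_neg hj]; exact hb j
  have ha1 : ∀ j, |a j| ≤ 1 := fun j => cantor_abs_le β hβ _ (ha j)
  have ha3 : a 3 = -(b 3) := by simp [ha_def]
  have haj : ∀ j, j ≠ 3 → a j = b j := by intro j hj; simp [ha_def, hj]
  set tgt : ℝ := if i = 3 then -(y 3) else y i with htgt_def
  set t : ℝ := tgt - a i - v i with ht_def
  set z : E4 := toE4 a + tr n₁ n₂ n₃ + t • EuclideanSpace.single i (1:ℝ) with hz_def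
  have hz_app : ∀ j, z j = a j + v j + (if j = i then t else 0) := by
    intro j; rw [hz_def, zpt_apply, hv]
  have hzi : z i = tgt := by rw [hz_app i, if_pos rfl, ht_def]; ring
  have hzj : ∀ j, j ≠ i → z j = a j + v j := by
    intro j hj; rw [hz_app j, if_neg hj, add_zero]
  have htgt_abs : |tgt| = |y i| := by
    rw [htgt_def]
    by_cases h : i = 3
    · rw [if_pos h, abs_neg, h]
    · rw [if_neg h]
  -- translation bounds
  have hn₁' : |(n₁:ℝ)| ≤ (m:ℝ) := by exact_mod_cast hn₁
  have hn₂' : |(n₂:ℝ)| ≤ (m:ℝ) := by exact_mod_cast hn₂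
  have hn₃' : |(n₃:ℝ)| ≤ (m:ℝ) := by exact_mod_cast hn₃
  have hvb : ∀ j, |v j| ≤ 2*(m:ℝ) := by
    intro j
    rw [hv, tr_apply]
    split_ifs
    · rw [abs_mul]; rw [abs_of_nonneg (by norm_num : (0:ℝ) ≤ 2)]; linarith
    · rw [abs_mul]; rw [abs_of_nonneg (by norm_num : (0:ℝ) ≤ 2)]; linarith
    · rw [abs_mul]; rw [abs_of_nonneg (by norm_num : (0:ℝ) ≤ 2)]; linarith
    · simp
  have hv3 : v 3 = 0 := by rw [hv]; exact tr_3 n₁ n₂ n₃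
  -- z coordinate bounds
  have hz_bnd : ∀ j, j ≠ i → |z j| ≤ 2*(m:ℝ)+1 := by
    intro j hj
    rw [hzj j hj]
    calc |a j + v j| ≤ |a j| + |v j| := abs_add_le _ _
      _ ≤ 2*(m:ℝ)+1 := by linarith [ha1 j, hvb j]
  have hz3 : |z 3| ≤ 3 := by
    by_cases h : (3 : Fin 4) = i
    · rw [h, hzi, htgt_abs, ← h]
      linarith [hfree3 h.symm]
    · rw [hzj 3 h, hv3, add_zero]
      linarith [ha1 3]
  have hzi_b : |z i| ≤ 2*(m:ℝ)+2 := by rw [hzi, htgt_abs]; exact hfree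
  have hz_all : ∀ j, |z j| ≤ 2*(m:ℝ)+3 := by
    intro j
    by_cases h : j = i
    · rw [h]; linarith [hzi_b]
    · linarith [hz_bnd j h]
  have hz_box : z ∈ Rbox m 13 := by
    refine ⟨by linarith [hz_all 0], by linarith [hz_all 1], by linarith [hz_all 2], ?_⟩
    norm_num; linarith [hz3]
  have hzKB : z ∈ KBm β m :=
    ⟨n₁, n₂, n₃, hn₁, hn₂, hn₃, toE4 a, i, t, fun j => ha j, hz_def⟩
  have heq : Fh z = reflect z := href z hzKB (hz_all 0) (hz_all 1) (hz_all 2) hz3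
  -- distance from y to reflect z
  have hrz : ∀ j, reflect z j = if j = 3 then -(z 3) else z j := fun j => reflect_apply z j
  have hcoord : ∀ j, |y j - reflect z j| ≤ 2*s := by
    intro j
    by_cases hj3 : j = 3
    · subst hj3
      rw [hrz 3, if_pos rfl]
      by_cases h : (3 : Fin 4) = i
      · rw [← h] at hzi
        rw [hzi, htgt_def, if_pos h.symm]
        simp [hs0.le]
      · rw [hzj 3 h, hv3, add_zero, ha3, neg_neg]
        have := hbd 3 h
        rwa [hv3, sub_zero] at this
    · rw [hrz j, if_neg hj3]
      by_cases h : j = i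
      · subst h
        rw [hzi, htgt_def, if_neg hj3]
        simp [hs0.le]
      · rw [hzj j h, haj j hj3]
        have := hbd j h
        calc |y j - (b j + v j)| = |y j - v j - b j| := by ring_nf
          _ ≤ 2*s := this
  have hdist1 : dist y (reflect z) ≤ 8*s := by
    calc dist y (reflect z) ≤ (2*s) + (2*s) + (2*s) + (2*s) :=
          dist_le_sum_coords y (reflect z) (fun _ => 2*s) (fun _ => by positivity) hcoord
      _ = 8*s := by ring
  have hdist2 : dist x z ≤ 8 * L * s := by
    have h1 := (hbl x hx z hz_box).1
    rw [heq, ← hy] at h1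
    have h2 : dist x z ≤ L * dist y (reflect z) := by
      calc dist x z = L * (L⁻¹ * dist x z) := by field_simp
        _ ≤ L * dist y (reflect z) := mul_le_mul_of_nonneg_left h1 hL0.le
    calc dist x z ≤ L * dist y (reflect z) := h2
      _ ≤ L * (8*s) := mul_le_mul_of_nonneg_left hdist1 hL0.le
      _ = 8 * L * s := by ring
  constructor
  · intro j hj
    have h1 : |x j - v j - a j| ≤ dist x z := by
      have := coord_le_dist x z j
      rw [hzj j hj] at this
      calc |x j - v j - a j| = |x j - (a j + v j)| := by ring_nf
        _ ≤ dist x z := this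
    apply mem_U1_of_close β hβ (a j) _ (ha j)
    calc |x j - v j - a j| ≤ 8 * L * s := le_trans h1 hdist2
      _ ≤ q/6 := hkey
      _ ≤ (3/8) * rB β 1 := by rw [← hq_def]; linarith
  · have h1 : |x i - z i| ≤ dist x z := coord_le_dist x z i
    have h3 : |z i| = |y i| := by rw [hzi, htgt_abs]
    have h2 : |x i| - |y i| ≤ |x i - z i| := by
      have h4 := abs_sub_abs_le_abs_sub (x i) (z i); rw [h3] at h4; linarith
    linarith [le_trans h1 hdist2]

/-- Lemma 4.5: there is `M` (depending only on `L` and `β`) such that any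
`L`-bi-Lipschitz homeomorphism `F̂` of `R_{m,13}` onto itself which equals the
reflection on `K_{B,m} ∩ ([-2m-3,2m+3]³ × [-3,3])` maps the good set `𝒢` off the
bad set `𝒯`. -/
theorem image_avoids_bad_set
    (β L : ℝ) (hβ : 2 < β) (hL : 1 ≤ L) :
    ∃ M : ℕ, ∀ (m : ℕ) (Fh : E4 → E4),
      Set.BijOn Fh (Rbox m 13) (Rbox m 13) →
      (∀ x ∈ Rbox m 13, ∀ y ∈ Rbox m 13,
        L⁻¹ * dist x y ≤ dist (Fh x) (Fh y) ∧ dist (Fh x) (Fh y) ≤ L * dist x y) →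
      (∀ x ∈ KBm β m,
        |x 0| ≤ 2 * (m : ℝ) + 3 → |x 1| ≤ 2 * (m : ℝ) + 3 → |x 2| ≤ 2 * (m : ℝ) + 3 →
        |x 3| ≤ 3 → Fh x = reflect x) →
      ∀ x ∈ Rbox m 13, ¬ nearLines β m 1 (2 * (m : ℝ) + 3) 3 x →
        ¬ nearLines β m (M + 1) (2 * (m : ℝ) + 2) 2 (Fh x) := by
  obtain ⟨M, hM⟩ := pow_unbounded_of_one_lt (48 * L) (one_lt_two (α := ℝ))
  refine ⟨M, fun m Fh _ hbl href x hx hnot hbad => ?_⟩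
  obtain ⟨n₁, n₂, n₃, hn₁, hn₂, hn₃, hcase⟩ := hbad
  have t0 := tr_0 n₁ n₂ n₃
  have t1 := tr_1 n₁ n₂ n₃
  have t2 := tr_2 n₁ n₂ n₃
  have t3 := tr_3 n₁ n₂ n₃
  rcases hcase with ⟨h0, h1, h2, h3⟩ | ⟨h0, h1, h2, h3⟩ | ⟨h0, h1, h2, h3⟩ | ⟨h0, h1, h2, h3⟩
  · -- free coordinate 0
    obtain ⟨hc, hfr⟩ := core β L hβ hL M hM m Fh hbl href x hx n₁ n₂ n₃ hn₁ hn₂ hn₃ 0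
      (by linarith [h0]) (fun h => absurd h (by decide))
      (by intro j hj; fin_cases j
          · exact absurd rfl hj
          · show Fh x 1 - tr n₁ n₂ n₃ 1 ∈ cantorU1 (rB β) (M+1)
            rw [t1]; exact h1
          · show Fh x 2 - tr n₁ n₂ n₃ 2 ∈ cantorU1 (rB β) (M+1)
            rw [t2]; exact h2
          · show Fh x 3 - tr n₁ n₂ n₃ 3 ∈ cantorU1 (rB β) (M+1)
            rw [t3, sub_zero]; exact h3)
    exact hnot ⟨n₁, n₂, n₃, hn₁, hn₂, hn₃, Or.inl ⟨by linarith [hfr, h0],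
      by have := hc 1 (by decide); rwa [t1] at this,
      by have := hc 2 (by decide); rwa [t2] at this,
      by have := hc 3 (by decide); rwa [t3, sub_zero] at this⟩⟩
  · -- free coordinate 1
    obtain ⟨hc, hfr⟩ := core β L hβ hL M hM m Fh hbl href x hx n₁ n₂ n₃ hn₁ hn₂ hn₃ 1
      (by linarith [h1]) (fun h => absurd h (by decide))
      (by intro j hj; fin_cases j
          · show Fh x 0 - tr n₁ n₂ n₃ 0 ∈ cantorU1 (rB β) (M+1)
            rw [t0]; exact h0
          · exact absurd rfl hj
          · show Fh x 2 - tr n₁ n₂ n₃ 2 ∈ cantorU1 (rB β) (M+1)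
            rw [t2]; exact h2
          · show Fh x 3 - tr n₁ n₂ n₃ 3 ∈ cantorU1 (rB β) (M+1)
            rw [t3, sub_zero]; exact h3)
    exact hnot ⟨n₁, n₂, n₃, hn₁, hn₂, hn₃, Or.inr (Or.inl ⟨
      by have := hc 0 (by decide); rwa [t0] at this,
      by linarith [hfr, h1],
      by have := hc 2 (by decide); rwa [t2] at this,
      by have := hc 3 (by decide); rwa [t3, sub_zero] at this⟩)⟩
  · -- free coordinate 2
    obtain ⟨hc, hfr⟩ := core β L hβ hL M hM m Fh hbl href x hx n₁ n₂ n₃ hn₁ hn₂ hn₃ 2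
      (by linarith [h2]) (fun h => absurd h (by decide))
      (by intro j hj; fin_cases j
          · show Fh x 0 - tr n₁ n₂ n₃ 0 ∈ cantorU1 (rB β) (M+1)
            rw [t0]; exact h0
          · show Fh x 1 - tr n₁ n₂ n₃ 1 ∈ cantorU1 (rB β) (M+1)
            rw [t1]; exact h1
          · exact absurd rfl hj
          · show Fh x 3 - tr n₁ n₂ n₃ 3 ∈ cantorU1 (rB β) (M+1)
            rw [t3, sub_zero]; exact h3)
    exact hnot ⟨n₁, n₂, n₃, hn₁, hn₂, hn₃, Or.inr (Or.inr (Or.inl ⟨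
      by have := hc 0 (by decide); rwa [t0] at this,
      by have := hc 1 (by decide); rwa [t1] at this,
      by linarith [hfr, h2],
      by have := hc 3 (by decide); rwa [t3, sub_zero] at this⟩))⟩
  · -- free coordinate 3
    have hm0 : (0:ℝ) ≤ 2*(m:ℝ) := by positivity
    obtain ⟨hc, hfr⟩ := core β L hβ hL M hM m Fh hbl href x hx n₁ n₂ n₃ hn₁ hn₂ hn₃ 3
      (by linarith [h3]) (fun _ => h3)
      (by intro j hj; fin_cases j
          · show Fh x 0 - tr n₁ n₂ n₃ 0 ∈ cantorU1 (rB β) (M+1)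
            rw [t0]; exact h0
          · show Fh x 1 - tr n₁ n₂ n₃ 1 ∈ cantorU1 (rB β) (M+1)
            rw [t1]; exact h1
          · show Fh x 2 - tr n₁ n₂ n₃ 2 ∈ cantorU1 (rB β) (M+1)
            rw [t2]; exact h2
          · exact absurd rfl hj)
    exact hnot ⟨n₁, n₂, n₃, hn₁, hn₂, hn₃, Or.inr (Or.inr (Or.inr ⟨
      by have := hc 0 (by decide); rwa [t0] at this,
      by have := hc 1 (by decide); rwa [t1] at this,
      by have := hc 2 (by decide); rwa [t2] at this,
      by linarith [hfr, h3]⟩))⟩
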